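/- Let b₁, …, b₆, c₁, …, c₆, s₁, …, s₆ be real numbers satisfying Dietmaier's conditions: b₆ = b₁, b₃ = b₄, b₂ = b₅, c₂ = c₅, c₆b₆ + c₁b₁ = c₃b₃ + c₄b₄, s₆ = s₂, s₃ = s₅, s₁ = s₄ = 0. Then Q₁⁺ = Q₄⁺ and Q₁⁻ = Q₄⁻ as polynomials in ℂ[x]. -/
import Mathlib


open Polynomial

noncomputable section

/-- The quad polynomial `Qᵢ⁺`, with 0-based indexing: `Qp b c s i` is `Q_{i+1}⁺` of the
parameters `b₁,…,b₆ = b 0,…,b 5`, etc. (indices mod 6). -/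
def Qp (b c s : Fin 6 → ℝ) (i : Fin 6) : Polynomial ℂ :=
  (X + C (((b (i+2) * c (i+2) - b i * c i : ℝ) : ℂ) / 2 - ((s i : ℝ) : ℂ) / 2 * Complex.I))^2
  + C (Complex.I / 2 * ((b i * s (i+1) + b (i+2) * s (i+2) + s (i+1) * b (i+2) * c (i+1)
        + s (i+2) * b i * c (i+1) : ℝ) : ℂ)
      - ((b i * b (i+2) * c (i+1) - s (i+1) * s (i+2) * c (i+1) : ℝ) : ℂ) / 2
      + (((s (i+1))^2 + (s (i+2))^2 - (b i)^2 + (b (i+1))^2 - (b (i+2))^2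
        - (b (i+1))^2 * (c (i+1))^2 : ℝ) : ℂ) / 4)

/-- The quad polynomial `Qᵢ⁻`: obtained from `Qᵢ⁺` by negating all `b j`, all `c j`,
and `s₂, s₄, s₆` (the `s j` with odd 0-based index `j`), keeping `s₁, s₃, s₅`. -/
def Qm (b c s : Fin 6 → ℝ) (i : Fin 6) : Polynomial ℂ :=
  Qp (fun j => -b j) (fun j => -c j) (fun j => if j.val % 2 = 1 then -s j else s j) i

/-- Dietmaier's conditions imply `Q₁⁺ = Q₄⁺` and `Q₁⁻ = Q₄⁻`. -/
theorem dietmaier_implies_quad_equalities (b c s : Fin 6 → ℝ)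
    (hb61 : b 5 = b 0) (hb34 : b 2 = b 3) (hb25 : b 1 = b 4)
    (hc25 : c 1 = c 4)
    (hf : c 5 * b 5 + c 0 * b 0 = c 2 * b 2 + c 3 * b 3)
    (hs62 : s 5 = s 1) (hs35 : s 2 = s 4)
    (hs1 : s 0 = 0) (hs4 : s 3 = 0) :
    Qp b c s 0 = Qp b c s 3 ∧ Qm b c s 0 = Qm b c s 3 := by
  rw [hb61, hb34] at hf
  have hfC : ((c 5 : ℝ) : ℂ) * ((b 0 : ℝ) : ℂ) + ((c 0 : ℝ) : ℂ) * ((b 0 : ℝ) : ℂ)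
      = ((c 2 : ℝ) : ℂ) * ((b 3 : ℝ) : ℂ) + ((c 3 : ℝ) : ℂ) * ((b 3 : ℝ) : ℂ) := by
    exact_mod_cast congrArg (fun t : ℝ => (t : ℂ)) hf
  constructor <;>
  · apply Polynomial.funext; intro x
    simp only [Qp, Qm, show (0:Fin 6)+1 = 1 from rfl, show (0:Fin 6)+2 = 2 from rfl,
      show (3:Fin 6)+1 = 4 from rfl, show (3:Fin 6)+2 = 5 from rfl,
      show ((0:Fin 6)).val % 2 = 0 from rfl, show ((1:Fin 6)).val % 2 = 1 from rfl,
      show ((2:Fin 6)).val % 2 = 0 from rfl, show ((3:Fin 6)).val % 2 = 1 from rfl,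
      show ((4:Fin 6)).val % 2 = 0 from rfl, show ((5:Fin 6)).val % 2 = 1 from rfl,
      reduceIte, eval_add, eval_pow, eval_mul, eval_C, eval_X]
    rw [hs1, hs4, hs62, hs35, hb61, hb34, hb25, hc25]
    push_cast
    linear_combination (-x - (((b 3 : ℝ):ℂ) * ((c 2 : ℝ):ℂ) - ((b 0 : ℝ):ℂ) * ((c 0 : ℝ):ℂ)
      + ((b 0 : ℝ):ℂ) * ((c 5 : ℝ):ℂ) - ((b 3 : ℝ):ℂ) * ((c 3 : ℝ):ℂ)) / 4) * hfC
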